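/- A short g.v.d. with a ground member removed is again a short g.v.d. -/
import Mathlib


/-- Terms: variables, number constants, and list constructors. -/
inductive Tm : Type
  | var : ℕ → Tm
  | const : ℕ → Tm
  | nil : Tm
  | cons : Tm → Tm → Tm
deriving DecidableEq

/-- The set of variables of a term. -/
def Tm.vars : Tm → Finset ℕ
  | .var x => {x}
  | .const _ => ∅
  | .nil => ∅
  | .cons s t => s.vars ∪ t.vars

/-- A term is ground if it has no variables. -/
def Tm.Ground (t : Tm) : Prop := t.vars = ∅

/-- Boolean groundness test. -/
def Tm.groundB : Tm → Bool
  | .var _ => false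
  | .const _ => true
  | .nil => true
  | .cons s t => s.groundB && t.groundB

/-- Applying a substitution to a term. -/
def Tm.subst (σ : ℕ → Tm) : Tm → Tm
  | .var x => σ x
  | .const c => .const c
  | .nil => .nil
  | .cons s t => .cons (s.subst σ) (t.subst σ)

/-- The open list `[t₁,…,tₙ|v]` with members `ts` and open-list variable `v`. -/
def mkOpen (ts : List Tm) (v : ℕ) : Tm := ts.foldr .cons (.var v)

/-- The (closed) list `[t₁,…,tₙ]` with members `ts`. -/
def mkList (ts : List Tm) : Tm := ts.foldr .cons .nil

/-- `(ts, v)` describes a g.v.d. (a linear open list with pairwise distinct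
    members, each member ground or a variable). -/
def IsGVD (ts : List Tm) (v : ℕ) : Prop :=
  (∀ t ∈ ts, t.Ground ∨ ∃ x, t = .var x) ∧
  ts.Nodup ∧
  (ts.map Tm.vars).Pairwise Disjoint ∧
  ∀ t ∈ ts, v ∉ t.vars

/-- `θ` unifies `s` and `t`. -/
def IsUnifier (s t : Tm) (θ : ℕ → Tm) : Prop := s.subst θ = t.subst θ

/-- `θ` is a most general unifier of `s` and `t`. -/
def IsMGU (s t : Tm) (θ : ℕ → Tm) : Prop :=
  IsUnifier s t θ ∧ ∀ σ, IsUnifier s t σ → ∃ δ, ∀ x, σ x = (θ x).subst δ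

/-- `s` is the `k`-th member (1-based) of the term `t`,
    i.e. `t = [t₁,…,t_{k-1},s|t₀]`. -/
inductive KthMem : Tm → ℕ → Tm → Prop
  | head (s t : Tm) : KthMem (.cons s t) 1 s
  | tail {t : Tm} {k : ℕ} {s : Tm} (a : Tm) : KthMem t k s → KthMem (.cons a t) (k + 1) s

/-- A g.v.d. `[t₁,…,tₙ|v]` is short if `n = 0` or `tₙ` is ground. -/
def IsShort (ts : List Tm) : Prop :=
  ts = [] ∨ ∃ t, ts.getLast? = some t ∧ t.Ground

/-- Drop the maximal suffix of non-ground (variable) members. -/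
def trimVars (l : List Tm) : List Tm :=
  (l.reverse.dropWhile (fun t => ! t.groundB)).reverse

/-- `(ts', v')` is obtained from `(ts, v)` by removing a ground member:
    either the last member `tₙ` is ground and is removed together with the
    trailing variables preceding it, or a ground member `tᵢ` with `i < n`
    is replaced by a fresh variable. -/
def Removed (ts : List Tm) (v : ℕ) (ts' : List Tm) (v' : ℕ) : Prop :=
  (ts ≠ [] ∧ (∃ t, ts.getLast? = some t ∧ t.Ground) ∧
    ts' = trimVars ts.dropLast ∧ v' = v) ∨
  (∃ i w, i + 1 < ts.length ∧ (ts.getD i .nil).Ground ∧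
    ts' = ts.set i (.var w) ∧ (∀ t ∈ ts, w ∉ t.vars) ∧ w ≠ v ∧ v' = v)

lemma ground_of_groundB {t : Tm} (h : t.groundB = true) : t.Ground := by
  induction t with
  | var x => simp [Tm.groundB] at h
  | const c => simp [Tm.Ground, Tm.vars]
  | nil => simp [Tm.Ground, Tm.vars]
  | cons s t ihs iht =>
      simp [Tm.groundB] at h
      have := ihs h.1; have := iht h.2
      have h1 := ihs h.1
      have h2 := iht h.2
      simp only [Tm.Ground, Tm.vars] at h1 h2 ⊢
      rw [h1, h2, Finset.empty_union]

lemma gvd_sublist {ts' ts : List Tm} {v : ℕ} (hs : ts'.Sublist ts)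
    (h : IsGVD ts v) : IsGVD ts' v := by
  obtain ⟨h1, h2, h3, h4⟩ := h
  exact ⟨fun t ht => h1 t (hs.subset ht), hs.nodup h2,
    h3.sublist (hs.map _), fun t ht => h4 t (hs.subset ht)⟩

lemma trimVars_sublist (l : List Tm) : (trimVars l).Sublist l := by
  have := (List.dropWhile_sublist (l := l.reverse) (fun t => ! t.groundB)).reverse
  simpa [trimVars] using this

lemma trimVars_short (l : List Tm) : IsShort (trimVars l) := by
  unfold IsShort trimVars
  have h := List.head?_dropWhile_not (fun t => ! t.groundB) l.reverse
  rcases hh : (l.reverse.dropWhile (fun t => ! t.groundB)).head? with _ | t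
  · left
    rcases e : l.reverse.dropWhile (fun t => ! t.groundB) with _ | ⟨a, r⟩
    · simp [e]
    · rw [e] at hh; simp at hh
  · right
    refine ⟨t, ?_, ?_⟩
    · rw [List.getLast?_reverse, hh]
    · rw [hh] at h; simp at h; exact ground_of_groundB h

/-- a short g.v.d. with a ground member removed is again a
    short g.v.d. -/
theorem removed_short_gvd (ts ts' : List Tm) (v v' : ℕ)
    (hgvd : IsGVD ts v) (hshort : IsShort ts)
    (hrem : Removed ts v ts' v') : IsGVD ts' v' ∧ IsShort ts' := by
  rcases hrem with ⟨-, -, hts', hv'⟩ | ⟨i, w, hi, -, hts', hw, hwv, hv'⟩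
  · subst hts' hv'
    exact ⟨gvd_sublist ((trimVars_sublist _).trans (List.dropLast_sublist ts)) hgvd,
      trimVars_short _⟩
  · subst hts' hv'
    obtain ⟨h1, h2, h3, h4⟩ := hgvd
    have hlen : ∀ {j}, j < (ts.set i (.var w)).length → j < ts.length := by
      intro j hj; simpa using hj
    have hwmem : ∀ {j} (hj : j < ts.length), w ∉ (ts[j]).vars :=
      fun hj => hw _ (List.getElem_mem hj)
    constructor
    · refine ⟨?_, ?_, ?_, ?_⟩
      · intro t ht
        rcases List.mem_or_eq_of_mem_set ht with h | h
        · exact h1 t h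
        · exact Or.inr ⟨w, h⟩
      · rw [List.nodup_iff_injective_get]
        intro ⟨a, ha⟩ ⟨b, hb⟩ hab
        simp only [List.get_eq_getElem, List.getElem_set] at hab
        by_cases hia : i = a <;> by_cases hib : i = b
        · simp [← hia, ← hib]
        · exfalso; rw [if_pos hia, if_neg hib] at hab
          have := hwmem (hlen hb)
          rw [← hab] at this; simp [Tm.vars] at this
        · exfalso; rw [if_neg hia, if_pos hib] at hab
          have := hwmem (hlen ha)
          rw [hab] at this; simp [Tm.vars] at this
        · rw [if_neg hia, if_neg hib] at hab
          have := List.nodup_iff_injective_get.mp h2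
            (a₁ := ⟨a, hlen ha⟩) (a₂ := ⟨b, hlen hb⟩) (by simpa using hab)
          simpa using this
      · rw [List.pairwise_iff_getElem]
        intro a b ha hb hab
        simp only [List.length_map] at ha hb
        simp only [List.getElem_map, List.getElem_set]
        have h3' := List.pairwise_iff_getElem.mp h3
        by_cases hia : i = a <;> by_cases hib : i = b
        · omega
        · rw [if_pos hia, if_neg hib]
          simpa [Tm.vars, Finset.disjoint_singleton_left] using hwmem (hlen hb)
        · rw [if_neg hia, if_pos hib]
          simpa [Tm.vars, Finset.disjoint_singleton_right] using hwmem (hlen ha)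
        · rw [if_neg hia, if_neg hib]
          have := h3' a b (by simpa using hlen ha) (by simpa using hlen hb) hab
          simpa using this
      · intro t ht
        rcases List.mem_or_eq_of_mem_set ht with h | h
        · exact h4 t h
        · subst h; simp [Tm.vars]; exact fun e => hwv e.symm
    · right
      have hne : ts ≠ [] := by intro e; rw [e] at hi; simp at hi
      rcases hshort with h | ⟨t, hl, hg⟩
      · exact absurd h hne
      refine ⟨t, ?_, hg⟩
      rw [List.getLast?_eq_getElem?] at hl ⊢
      rw [List.length_set, List.getElem?_set_ne (by omega)]
      exact hl
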